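/- (Strict separation claim from the Perron argument.) Let the system F_j(x,u(x),Du_j(x),D²u_j(x)) = 0, j = 1,…,m₁+m₂, be degenerate elliptic and balanced quasi-monotone. Let (w₁,w₂) be a bounded sub-super solution and (u₁,u₂) a bounded super-sub solution with w₁ ≤ u₁ and u₂ ≤ w₂ pointwise in Ω. Fix 1 ≤ j ≤ m₁ and x ∈ Ω, and suppose φ ∈ C²(Ω) touches u_{1j}* from above at x and F_j(x, u₁*(x), u_{2*}(x), Dφ(x), D²φ(x)) > 0. Then w_{1j}*(x) < u_{1j}*(x). -/

import Mathlib

open Filter Topology Matrix Bornology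

noncomputable section

/-- Euclidean space ℝⁿ. -/
abbrev En (n : ℕ) := EuclideanSpace ℝ (Fin n)

/-- n×n real matrices (the symmetric ones model 𝒮ⁿ). -/
abbrev Symn (n : ℕ) := Matrix (Fin n) (Fin n) ℝ

/-- Loewner order: `X ≤ Y` iff `Y - X` is positive semidefinite. -/
def LoewnerLE {ι : Type*} [Fintype ι] (X Y : Matrix ι ι ℝ) : Prop := (Y - X).PosSemidef

/-- Upper semicontinuous envelope relative to Ω: f*(x) = limsup_{Ω ∋ y → x} f(y). -/
def uEnv {n : ℕ} (Ω : Set (En n)) (f : En n → ℝ) (x : En n) : ℝ := limsup f (𝓝[Ω] x)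

/-- Lower semicontinuous envelope relative to Ω: f_*(x) = liminf_{Ω ∋ y → x} f(y). -/
def lEnv {n : ℕ} (Ω : Set (En n)) (f : En n → ℝ) (x : En n) : ℝ := liminf f (𝓝[Ω] x)

/-- φ touches f from above at x (within Ω). -/
def TouchAbove {n : ℕ} (Ω : Set (En n)) (φ f : En n → ℝ) (x : En n) : Prop :=
  φ x = f x ∧ ∃ N : Set (En n), IsOpen N ∧ x ∈ N ∧ ∀ y ∈ (N ∩ Ω) \ {x}, f y < φ y

/-- φ touches f from below at x (within Ω). -/
def TouchBelow {n : ℕ} (Ω : Set (En n)) (φ f : En n → ℝ) (x : En n) : Prop :=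
  φ x = f x ∧ ∃ N : Set (En n), IsOpen N ∧ x ∈ N ∧ ∀ y ∈ (N ∩ Ω) \ {x}, φ y < f y

/-- Hessian matrix D²φ(x) of a scalar function. -/
def hess {n : ℕ} (φ : En n → ℝ) (x : En n) : Symn n :=
  Matrix.of fun i j =>
    iteratedFDeriv ℝ 2 φ x ![EuclideanSpace.single i 1, EuclideanSpace.single j 1]

/-- The type of the operators F_j(x, r, s, p, X). -/
abbrev Op (n m₁ m₂ : ℕ) :=
  En n → (Fin m₁ → ℝ) → (Fin m₂ → ℝ) → En n → Symn n → ℝ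

/-- Continuity of an operator on Ω × ℝ^{m₁} × ℝ^{m₂} × ℝⁿ × 𝒮ⁿ. -/
def OpContinuousOn {n m₁ m₂ : ℕ} (Ω : Set (En n)) (F : Op n m₁ m₂) : Prop :=
  ContinuousOn (fun q : En n × (Fin m₁ → ℝ) × (Fin m₂ → ℝ) × En n × Symn n =>
      F q.1 q.2.1 q.2.2.1 q.2.2.2.1 q.2.2.2.2)
    (Ω ×ˢ (Set.univ : Set ((Fin m₁ → ℝ) × (Fin m₂ → ℝ) × En n × Symn n)))

/-- Degenerate ellipticity of an operator. -/
def DegElliptic {n m₁ m₂ : ℕ} (Ω : Set (En n)) (F : Op n m₁ m₂) : Prop :=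
  ∀ x ∈ Ω, ∀ (r : Fin m₁ → ℝ) (s : Fin m₂ → ℝ) (p : En n) (X Y : Symn n),
    X.IsSymm → Y.IsSymm → LoewnerLE X Y → F x r s p Y ≤ F x r s p X

/-- Balanced quasi-monotonicity of the system (F1, F2). -/
def BalancedQM {n m₁ m₂ : ℕ} (Ω : Set (En n))
    (F1 : Fin m₁ → Op n m₁ m₂) (F2 : Fin m₂ → Op n m₁ m₂) : Prop :=
  (∀ j, ∀ x ∈ Ω, ∀ (r : Fin m₁ → ℝ) (s σ : Fin m₂ → ℝ) (p : En n) (X : Symn n), X.IsSymm →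
      (∀ i, s i ≤ σ i) → F1 j x r s p X ≤ F1 j x r σ p X) ∧
  (∀ j, ∀ x ∈ Ω, ∀ (r ρ : Fin m₁ → ℝ) (s : Fin m₂ → ℝ) (p : En n) (X : Symn n), X.IsSymm →
      (∀ i, r i ≤ ρ i) → r j = ρ j → F1 j x ρ s p X ≤ F1 j x r s p X) ∧
  (∀ j, ∀ x ∈ Ω, ∀ (r ρ : Fin m₁ → ℝ) (s : Fin m₂ → ℝ) (p : En n) (X : Symn n), X.IsSymm →
      (∀ i, r i ≤ ρ i) → F2 j x r s p X ≤ F2 j x ρ s p X) ∧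
  (∀ j, ∀ x ∈ Ω, ∀ (r : Fin m₁ → ℝ) (s σ : Fin m₂ → ℝ) (p : En n) (X : Symn n), X.IsSymm →
      (∀ i, s i ≤ σ i) → s j = σ j → F2 j x r σ p X ≤ F2 j x r s p X)

/-- Boundedness of a vector-valued function on Ω. -/
def BddOn {n m : ℕ} (Ω : Set (En n)) (u : En n → Fin m → ℝ) : Prop :=
  ∃ M : ℝ, ∀ x ∈ Ω, ∀ i, |u x i| ≤ M

/-- (u1, u2) is a super-sub solution of the system (F1, F2) in Ω. -/
def SuperSub {n m₁ m₂ : ℕ} (Ω : Set (En n))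
    (F1 : Fin m₁ → Op n m₁ m₂) (F2 : Fin m₂ → Op n m₁ m₂)
    (u1 : En n → Fin m₁ → ℝ) (u2 : En n → Fin m₂ → ℝ) : Prop :=
  BddOn Ω u1 ∧ BddOn Ω u2 ∧
  (∀ j, ∀ x ∈ Ω, ∀ φ : En n → ℝ, ContDiff ℝ 2 φ →
      TouchBelow Ω φ (lEnv Ω fun y => u1 y j) x →
      0 ≤ F1 j x (fun i => lEnv Ω (fun y => u1 y i) x) (fun i => uEnv Ω (fun y => u2 y i) x)
            (gradient φ x) (hess φ x)) ∧
  (∀ j, ∀ x ∈ Ω, ∀ φ : En n → ℝ, ContDiff ℝ 2 φ →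
      TouchAbove Ω φ (uEnv Ω fun y => u2 y j) x →
      F2 j x (fun i => lEnv Ω (fun y => u1 y i) x) (fun i => uEnv Ω (fun y => u2 y i) x)
          (gradient φ x) (hess φ x) ≤ 0)

/-- (u1, u2) is a sub-super solution of the system (F1, F2) in Ω. -/
def SubSuper {n m₁ m₂ : ℕ} (Ω : Set (En n))
    (F1 : Fin m₁ → Op n m₁ m₂) (F2 : Fin m₂ → Op n m₁ m₂)
    (u1 : En n → Fin m₁ → ℝ) (u2 : En n → Fin m₂ → ℝ) : Prop :=
  BddOn Ω u1 ∧ BddOn Ω u2 ∧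
  (∀ j, ∀ x ∈ Ω, ∀ φ : En n → ℝ, ContDiff ℝ 2 φ →
      TouchAbove Ω φ (uEnv Ω fun y => u1 y j) x →
      F1 j x (fun i => uEnv Ω (fun y => u1 y i) x) (fun i => lEnv Ω (fun y => u2 y i) x)
          (gradient φ x) (hess φ x) ≤ 0) ∧
  (∀ j, ∀ x ∈ Ω, ∀ φ : En n → ℝ, ContDiff ℝ 2 φ →
      TouchBelow Ω φ (lEnv Ω fun y => u2 y j) x →
      0 ≤ F2 j x (fun i => uEnv Ω (fun y => u1 y i) x) (fun i => lEnv Ω (fun y => u2 y i) x)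
            (gradient φ x) (hess φ x))

lemma hess_isSymm {n : ℕ} {φ : En n → ℝ} (hφ : ContDiff ℝ 2 φ) (x : En n) :
    (hess φ x).IsSymm := by
  have h := hφ.contDiffAt (x := x) |>.isSymmSndFDerivAt (by simp)
  apply Matrix.IsSymm.ext
  intro i j
  simp only [hess, Matrix.of_apply, iteratedFDeriv_two_apply, Matrix.cons_val_zero,
    Matrix.cons_val_one, Matrix.head_cons]
  exact h.eq _ _

/-- Strict separation claim from the Perron argument: if (w1, w2) is a
bounded sub-super solution, (u1, u2) a bounded super-sub solution with w1 ≤ u1 and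
u2 ≤ w2 in Ω, φ ∈ C² touches u_{1j}* from above at x ∈ Ω and
F_j(x, u₁*(x), u_{2*}(x), Dφ(x), D²φ(x)) > 0, then w_{1j}*(x) < u_{1j}*(x). -/
theorem strict_separation {n m₁ m₂ : ℕ} (hm₁ : 1 ≤ m₁)
    (Ω : Set (En n)) (hΩo : IsOpen Ω) (hΩb : IsBounded Ω)
    (F1 : Fin m₁ → Op n m₁ m₂) (F2 : Fin m₂ → Op n m₁ m₂)
    (hF1c : ∀ j, OpContinuousOn Ω (F1 j)) (hF2c : ∀ j, OpContinuousOn Ω (F2 j))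
    (hF1e : ∀ j, DegElliptic Ω (F1 j)) (hF2e : ∀ j, DegElliptic Ω (F2 j))
    (hQM : BalancedQM Ω F1 F2)
    (w1 u1 : En n → Fin m₁ → ℝ) (w2 u2 : En n → Fin m₂ → ℝ)
    (hw : SubSuper Ω F1 F2 w1 w2) (hu : SuperSub Ω F1 F2 u1 u2)
    (hle1 : ∀ x ∈ Ω, ∀ j, w1 x j ≤ u1 x j)
    (hle2 : ∀ x ∈ Ω, ∀ j, u2 x j ≤ w2 x j)
    (j : Fin m₁) (x : En n) (hx : x ∈ Ω)
    (φ : En n → ℝ) (hφ : ContDiff ℝ 2 φ)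
    (htouch : TouchAbove Ω φ (uEnv Ω fun y => u1 y j) x)
    (hpos : 0 < F1 j x (fun i => uEnv Ω (fun y => u1 y i) x)
        (fun i => lEnv Ω (fun y => u2 y i) x) (gradient φ x) (hess φ x)) :
    uEnv Ω (fun y => w1 y j) x < uEnv Ω (fun y => u1 y j) x := by
  obtain ⟨Mw, hMw⟩ := hw.1
  obtain ⟨Mu, hMu⟩ := hu.1
  obtain ⟨Mw2, hMw2⟩ := hw.2.1
  obtain ⟨Mu2, hMu2⟩ := hu.2.1
  have hne : ∀ y ∈ Ω, (𝓝[Ω] y).NeBot := by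
    intro y hy
    rw [nhdsWithin_eq_nhds.2 (hΩo.mem_nhds hy)]; infer_instance
  have key1 : ∀ y ∈ Ω, ∀ i, uEnv Ω (fun z => w1 z i) y ≤ uEnv Ω (fun z => u1 z i) y := by
    intro y hy i
    have := hne y hy
    apply limsup_le_limsup
    · exact eventually_nhdsWithin_of_forall fun z hz => hle1 z hz i
    · exact IsBoundedUnder.isCoboundedUnder_le
        ⟨-Mw, eventually_map.2 <| eventually_nhdsWithin_of_forall
          fun z hz => (abs_le.1 (hMw z hz i)).1⟩
    · exact ⟨Mu, eventually_map.2 <| eventually_nhdsWithin_of_forall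
        fun z hz => (abs_le.1 (hMu z hz i)).2⟩
  have := hne x hx
  have key2 : ∀ i, lEnv Ω (fun z => u2 z i) x ≤ lEnv Ω (fun z => w2 z i) x := by
    intro i
    apply liminf_le_liminf
    · exact eventually_nhdsWithin_of_forall fun z hz => hle2 z hz i
    · exact ⟨-Mu2, eventually_map.2 <| eventually_nhdsWithin_of_forall
        fun z hz => (abs_le.1 (hMu2 z hz i)).1⟩
    · exact IsBoundedUnder.isCoboundedUnder_ge
        ⟨Mw2, eventually_map.2 <| eventually_nhdsWithin_of_forall
          fun z hz => (abs_le.1 (hMw2 z hz i)).2⟩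
  by_contra hcon
  push_neg at hcon
  have heq : uEnv Ω (fun y => w1 y j) x = uEnv Ω (fun y => u1 y j) x :=
    le_antisymm (key1 x hx j) hcon
  obtain ⟨hφx, N, hNo, hxN, hNlt⟩ := htouch
  have htouch' : TouchAbove Ω φ (uEnv Ω fun y => w1 y j) x :=
    ⟨hφx.trans heq.symm, N, hNo, hxN,
      fun y hy => lt_of_le_of_lt (key1 y hy.1.2 j) (hNlt y hy)⟩
  have hle0 := hw.2.2.1 j x hx φ hφ htouch'
  have hsym : (hess φ x).IsSymm := hess_isSymm hφ x
  obtain ⟨hQM1, hQM2, -, -⟩ := hQM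
  have h1 := hQM2 j x hx (fun i => uEnv Ω (fun y => w1 y i) x)
    (fun i => uEnv Ω (fun y => u1 y i) x) (fun i => lEnv Ω (fun y => u2 y i) x)
    (gradient φ x) (hess φ x) hsym (fun i => key1 x hx i) heq
  have h2 := hQM1 j x hx (fun i => uEnv Ω (fun y => w1 y i) x)
    (fun i => lEnv Ω (fun y => u2 y i) x) (fun i => lEnv Ω (fun y => w2 y i) x)
    (gradient φ x) (hess φ x) hsym key2
  linarith
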